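/- Let p be a probability measure on ℝ² (joint distribution of data x and noise η) with finite first and second moments, let μ_X and μ_H denote the means of the two marginals, Var(x) > 0 the variance of the first marginal, and Cov(x, η) the covariance. Let σ² ∈ (0, 1] and 0 ≤ L < 1 − σ². Then among affine functions f(x) = m·x + b with m ∈ [−L, L], the functional ∫ |(1 − σ²)·x − η − f(x)|² dp(x, η) is uniquely minimized by: f*(x) = L·x + (1 − σ² − L)·μ_X − μ_H if Cov(x,η)/Var(x) < 1 − σ² − L; f*(x) = (1 − σ² − Cov(x,η)/Var(x))·x + (Cov(x,η)/Var(x))·μ_X − μ_H if Cov(x,η)/Var(x) ∈ [1 − σ² − L, 1 − σ² + L]; and f*(x) = −L·x + (1 − σ² + L)·μ_X − μ_H if Cov(x,η)/Var(x) > 1 − σ² + L. -/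

import Mathlib

open MeasureTheory

/-- Optimal slope of the approximation training with dependent data and noise:
the value `1 - s - r` (with `r = Cov(x,η)/Var(x)`) clamped to `[-L, L]`,
expressed through the three cases of Lemma C.1. -/
noncomputable def approxSlopeGeneral (s L r : ℝ) : ℝ :=
  if r < 1 - s - L then L else if 1 - s + L < r then -L else 1 - s - r


/-- Squared distance to a point is minimized over an interval by clamping. -/
lemma clamp_sq_le {lo hi r c : ℝ} (h1 : lo ≤ c) (h2 : c ≤ hi) :
    ((if r < lo then lo else if hi < r then hi else r) - r) ^ 2 ≤ (c - r) ^ 2 := by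
  split_ifs with ha hb
  · nlinarith [mul_nonneg (sub_nonneg.2 h1) (show (0:ℝ) ≤ c + lo - 2*r by linarith)]
  · nlinarith [mul_nonneg (sub_nonneg.2 h2) (show (0:ℝ) ≤ 2*r - c - hi by linarith)]
  · nlinarith [sq_nonneg (c - r)]

/-- The clamp is the unique minimizer. -/
lemma clamp_sq_eq {lo hi r c : ℝ} (h1 : lo ≤ c) (h2 : c ≤ hi)
    (h : (c - r) ^ 2 ≤ ((if r < lo then lo else if hi < r then hi else r) - r) ^ 2) :
    c = if r < lo then lo else if hi < r then hi else r := by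
  split_ifs at h ⊢ with ha hb
  · have hle : c ≤ lo := by
      by_contra hcon
      push_neg at hcon
      have : (lo - r) ^ 2 < (c - r) ^ 2 := by
        nlinarith [mul_pos (sub_pos.2 hcon) (show (0:ℝ) < c + lo - 2*r by linarith)]
      linarith
    linarith
  · have hge : hi ≤ c := by
      by_contra hcon
      push_neg at hcon
      have : (hi - r) ^ 2 < (c - r) ^ 2 := by
        nlinarith [mul_pos (sub_pos.2 hcon) (show (0:ℝ) < 2*r - c - hi by linarith)]
      linarith
    linarith
  · have hnn := sq_nonneg (c - r)
    have h0 : (c - r) ^ 2 = 0 := le_antisymm (by linarith) hnn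
    have := (pow_eq_zero_iff (by norm_num : (2:ℕ) ≠ 0)).mp h0
    linarith

/-- **Approximation training with dependent data and noise (Lemma C.1).** Let
`p` be a joint probability distribution of `(x, η)` on `ℝ²` with finite first
and second moments, marginal means `μX, μH`, `Var(x) > 0` and covariance
`Cov(x, η)`; let `s = σ² ∈ (0,1]` and `0 ≤ L < 1 - s`. Among affine functions
`f(x) = m x + b` with `|m| ≤ L`, the loss `∫ |(1-s)x - η - f(x)|² dp` is
uniquely minimized by the slope `m* = approxSlopeGeneral s L (Cov/Var)` and
intercept `b* = (1 - s - m*)·μX - μH` (matching the three stated cases). -/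
theorem approx_training_general_noise_minimizer
    (p : Measure (ℝ × ℝ)) [IsProbabilityMeasure p]
    (hx1 : Integrable (fun q : ℝ × ℝ => q.1) p)
    (hη1 : Integrable (fun q : ℝ × ℝ => q.2) p)
    (hx2 : Integrable (fun q : ℝ × ℝ => q.1 ^ 2) p)
    (hη2 : Integrable (fun q : ℝ × ℝ => q.2 ^ 2) p)
    (hxη : Integrable (fun q : ℝ × ℝ => q.1 * q.2) p)
    (hVar : 0 < ∫ q, (q.1 - ∫ q', q'.1 ∂p) ^ 2 ∂p)
    (s L : ℝ) (hs0 : 0 < s) (hs1 : s ≤ 1) (hL0 : 0 ≤ L) (hL : L < 1 - s) :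
    (∀ m b : ℝ, |m| ≤ L →
        (∫ q, ((1 - s) * q.1 - q.2 -
            (approxSlopeGeneral s L
                ((∫ q', (q'.1 - ∫ q'', q''.1 ∂p) * (q'.2 - ∫ q'', q''.2 ∂p) ∂p) /
                  ∫ q', (q'.1 - ∫ q'', q''.1 ∂p) ^ 2 ∂p) * q.1 +
              ((1 - s - approxSlopeGeneral s L
                  ((∫ q', (q'.1 - ∫ q'', q''.1 ∂p) * (q'.2 - ∫ q'', q''.2 ∂p) ∂p) /
                    ∫ q', (q'.1 - ∫ q'', q''.1 ∂p) ^ 2 ∂p)) * (∫ q', q'.1 ∂p) -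
                ∫ q', q'.2 ∂p))) ^ 2 ∂p) ≤
          ∫ q, ((1 - s) * q.1 - q.2 - (m * q.1 + b)) ^ 2 ∂p) ∧
    (∀ m b : ℝ, |m| ≤ L →
        (∫ q, ((1 - s) * q.1 - q.2 - (m * q.1 + b)) ^ 2 ∂p) ≤
          (∫ q, ((1 - s) * q.1 - q.2 -
            (approxSlopeGeneral s L
                ((∫ q', (q'.1 - ∫ q'', q''.1 ∂p) * (q'.2 - ∫ q'', q''.2 ∂p) ∂p) /
                  ∫ q', (q'.1 - ∫ q'', q''.1 ∂p) ^ 2 ∂p) * q.1 +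
              ((1 - s - approxSlopeGeneral s L
                  ((∫ q', (q'.1 - ∫ q'', q''.1 ∂p) * (q'.2 - ∫ q'', q''.2 ∂p) ∂p) /
                    ∫ q', (q'.1 - ∫ q'', q''.1 ∂p) ^ 2 ∂p)) * (∫ q', q'.1 ∂p) -
                ∫ q', q'.2 ∂p))) ^ 2 ∂p) →
        m = approxSlopeGeneral s L
            ((∫ q', (q'.1 - ∫ q'', q''.1 ∂p) * (q'.2 - ∫ q'', q''.2 ∂p) ∂p) /
              ∫ q', (q'.1 - ∫ q'', q''.1 ∂p) ^ 2 ∂p) ∧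
          b = (1 - s - approxSlopeGeneral s L
                ((∫ q', (q'.1 - ∫ q'', q''.1 ∂p) * (q'.2 - ∫ q'', q''.2 ∂p) ∂p) /
                  ∫ q', (q'.1 - ∫ q'', q''.1 ∂p) ^ 2 ∂p)) * (∫ q', q'.1 ∂p) -
              ∫ q', q'.2 ∂p) := by
    classical
  set μX : ℝ := ∫ q : ℝ × ℝ, q.1 ∂p with hμX
  set μH : ℝ := ∫ q : ℝ × ℝ, q.2 ∂p with hμH
  set V : ℝ := ∫ q : ℝ × ℝ, (q.1 - μX) ^ 2 ∂p with hV
  set C : ℝ := ∫ q : ℝ × ℝ, (q.1 - μX) * (q.2 - μH) ∂p with hC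
  set r : ℝ := C / V with hr
  set A : ℝ := approxSlopeGeneral s L r with hAdef
  set B : ℝ := (1 - s - A) * μX - μH with hBdef
  have hVpos : 0 < V := hVar
  have hVne : V ≠ 0 := ne_of_gt hVpos
  -- moment expansion of the quadratic loss
  have expand : ∀ c b : ℝ, ∫ q : ℝ × ℝ, (c * q.1 - q.2 - b) ^ 2 ∂p
      = c ^ 2 * (∫ q : ℝ × ℝ, q.1 ^ 2 ∂p) - 2 * c * (∫ q : ℝ × ℝ, q.1 * q.2 ∂p)
        - 2 * c * b * μX + (∫ q : ℝ × ℝ, q.2 ^ 2 ∂p) + 2 * b * μH + b ^ 2 := by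
    intro c b
    have i6 : Integrable (fun _ : ℝ × ℝ => b ^ 2) p := integrable_const _
    have i5 : Integrable (fun q : ℝ × ℝ => (2 * b) * q.2 + b ^ 2) p :=
      (hη1.const_mul _).add i6
    have i4 : Integrable (fun q : ℝ × ℝ => q.2 ^ 2 + ((2 * b) * q.2 + b ^ 2)) p :=
      hη2.add i5
    have i3 : Integrable (fun q : ℝ × ℝ =>
        (-(2 * c * b)) * q.1 + (q.2 ^ 2 + ((2 * b) * q.2 + b ^ 2))) p :=
      (hx1.const_mul _).add i4
    have i2 : Integrable (fun q : ℝ × ℝ => (-(2 * c)) * (q.1 * q.2)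
        + ((-(2 * c * b)) * q.1 + (q.2 ^ 2 + ((2 * b) * q.2 + b ^ 2)))) p :=
      (hxη.const_mul _).add i3
    have h : (fun q : ℝ × ℝ => (c * q.1 - q.2 - b) ^ 2)
        = fun q : ℝ × ℝ => c ^ 2 * q.1 ^ 2 + ((-(2 * c)) * (q.1 * q.2)
            + ((-(2 * c * b)) * q.1 + (q.2 ^ 2 + ((2 * b) * q.2 + b ^ 2)))) := by
      funext q; ring
    rw [h, integral_add (hx2.const_mul _) i2, integral_add (hxη.const_mul _) i3,
      integral_add (hx1.const_mul _) i4, integral_add hη2 i5,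
      integral_add (hη1.const_mul _) i6,
      integral_const_mul, integral_const_mul, integral_const_mul, integral_const_mul,
      integral_const]
    simp only [measure_univ, ENNReal.toReal_one, probReal_univ, smul_eq_mul, one_mul, mul_one]
    rw [← hμX, ← hμH]
    ring
  -- variance and covariance in raw moments
  have hVeq : V = (∫ q : ℝ × ℝ, q.1 ^ 2 ∂p) - μX ^ 2 := by
    rw [hV]
    have i3 : Integrable (fun _ : ℝ × ℝ => μX ^ 2) p := integrable_const _
    have i2 : Integrable (fun q : ℝ × ℝ => (-(2 * μX)) * q.1 + μX ^ 2) p :=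
      (hx1.const_mul _).add i3
    have h : (fun q : ℝ × ℝ => (q.1 - μX) ^ 2)
        = fun q : ℝ × ℝ => q.1 ^ 2 + ((-(2 * μX)) * q.1 + μX ^ 2) := by funext q; ring
    rw [h, integral_add hx2 i2, integral_add (hx1.const_mul _) i3,
      integral_const_mul, integral_const]
    simp only [measure_univ, ENNReal.toReal_one, probReal_univ, smul_eq_mul, one_mul, mul_one]
    rw [← hμX]
    ring
  have hCeq : C = (∫ q : ℝ × ℝ, q.1 * q.2 ∂p) - μX * μH := by
    rw [hC]
    have i4 : Integrable (fun _ : ℝ × ℝ => μX * μH) p := integrable_const _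
    have i3 : Integrable (fun q : ℝ × ℝ => (-μX) * q.2 + μX * μH) p :=
      (hη1.const_mul _).add i4
    have i2 : Integrable (fun q : ℝ × ℝ => (-μH) * q.1 + ((-μX) * q.2 + μX * μH)) p :=
      (hx1.const_mul _).add i3
    have h : (fun q : ℝ × ℝ => (q.1 - μX) * (q.2 - μH))
        = fun q : ℝ × ℝ => q.1 * q.2 + ((-μH) * q.1 + ((-μX) * q.2 + μX * μH)) := by
      funext q; ring
    rw [h, integral_add hxη i2, integral_add (hx1.const_mul _) i3,
      integral_add (hη1.const_mul _) i4,
      integral_const_mul, integral_const_mul, integral_const]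
    simp only [measure_univ, ENNReal.toReal_one, probReal_univ, smul_eq_mul, one_mul, mul_one]
    rw [← hμX, ← hμH]
    ring
  have hM2' : (∫ q : ℝ × ℝ, q.1 ^ 2 ∂p) = V + μX ^ 2 := by rw [hVeq]; ring
  have hMxη' : (∫ q : ℝ × ℝ, q.1 * q.2 ∂p) = C + μX * μH := by rw [hCeq]; ring
  -- completed-square form of the loss
  have key : ∃ K : ℝ, ∀ c b : ℝ, ∫ q : ℝ × ℝ, (c * q.1 - q.2 - b) ^ 2 ∂p
      = V * (c - r) ^ 2 + (b - (c * μX - μH)) ^ 2 + K := by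
    refine ⟨(∫ q : ℝ × ℝ, q.2 ^ 2 ∂p) - μH ^ 2 - C ^ 2 / V, fun c b => ?_⟩
    rw [expand c b, hM2', hMxη', hr]
    field_simp
    ring
  obtain ⟨K, key⟩ := key
  have loss_eq : ∀ m b : ℝ, ∫ q : ℝ × ℝ, ((1 - s) * q.1 - q.2 - (m * q.1 + b)) ^ 2 ∂p
      = V * ((1 - s - m) - r) ^ 2 + (b - ((1 - s - m) * μX - μH)) ^ 2 + K := by
    intro m b
    have h : (fun q : ℝ × ℝ => ((1 - s) * q.1 - q.2 - (m * q.1 + b)) ^ 2)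
        = fun q : ℝ × ℝ => ((1 - s - m) * q.1 - q.2 - b) ^ 2 := by funext q; ring
    rw [h, key]
  have hA : 1 - s - A = if r < 1 - s - L then 1 - s - L else if 1 - s + L < r then 1 - s + L
      else r := by
    rw [hAdef]
    unfold approxSlopeGeneral
    split_ifs <;> ring
  have hB0 : B - ((1 - s - A) * μX - μH) = 0 := by rw [hBdef]; ring
  clear_value μX μH V C r A B
  constructor
  · intro m b hm
    rw [loss_eq A B, loss_eq m b, hB0]
    obtain ⟨hm1, hm2⟩ := abs_le.mp hm
    have hc1 : 1 - s - L ≤ 1 - s - m := by linarith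
    have hc2 : 1 - s - m ≤ 1 - s + L := by linarith
    have hclamp := clamp_sq_le (r := r) hc1 hc2
    rw [← hA] at hclamp
    have hmul := mul_le_mul_of_nonneg_left hclamp hVpos.le
    have h00 : (0:ℝ) ^ 2 = 0 := by norm_num
    linarith [sq_nonneg (b - ((1 - s - m) * μX - μH))]
  · intro m b hm hle
    rw [loss_eq A B, loss_eq m b, hB0] at hle
    obtain ⟨hm1, hm2⟩ := abs_le.mp hm
    have hc1 : 1 - s - L ≤ 1 - s - m := by linarith
    have hc2 : 1 - s - m ≤ 1 - s + L := by linarith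
    have h00 : (0:ℝ) ^ 2 = 0 := by norm_num
    have hle2 : V * ((1 - s - m) - r) ^ 2 ≤ V * ((1 - s - A) - r) ^ 2 := by
      linarith [sq_nonneg (b - ((1 - s - m) * μX - μH))]
    have hsq : ((1 - s - m) - r) ^ 2 ≤ ((1 - s - A) - r) ^ 2 :=
      (mul_le_mul_iff_right₀ hVpos).mp hle2
    rw [hA] at hsq
    have hm_eq := clamp_sq_eq hc1 hc2 hsq
    rw [← hA] at hm_eq
    have hmA : m = A := by linarith
    refine ⟨hmA, ?_⟩
    rw [hmA] at hle
    have hclamp := clamp_sq_le (r := r) (show 1 - s - L ≤ 1 - s - A by linarith)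
      (show 1 - s - A ≤ 1 - s + L by linarith)
    rw [← hA] at hclamp
    have hmul := mul_le_mul_of_nonneg_left hclamp hVpos.le
    have hnn := sq_nonneg (b - ((1 - s - A) * μX - μH))
    have h0 : (b - ((1 - s - A) * μX - μH)) ^ 2 = 0 := le_antisymm (by linarith) hnn
    have hb0 := (pow_eq_zero_iff (by norm_num : (2:ℕ) ≠ 0)).mp h0
    rw [hBdef]
    linarith
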